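/- Let α ∈ ℝ and let P : ℕ → ℝ[X] be the sequence of polynomials defined by P₀ = 1 and P_{n+1} = X·(1−X)·P_n' + (α + n)·X·P_n (where P_n' denotes the formal derivative). Then for every n ∈ ℕ, P_n = Σ_{k=0}^n S(n,k)·(α)_k·X^k·(1−X)^{n−k}, where S(n,k) is the Stirling number of the second kind. -/

import Mathlib

/-- The Pochhammer symbol (rising factorial) `(a)_k = a (a+1) ⋯ (a+k-1)`. -/
def poch (a : ℝ) (k : ℕ) : ℝ := ∏ i ∈ Finset.range k, (a + i)

/-- The Stirling numbers of the second kind,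
`S(n,k) = (1/k!) Σ_{j=0}^k C(k,j) (-1)^{k-j} j^n`. -/
noncomputable def stirling2 (n k : ℕ) : ℝ :=
  (1 / k.factorial) *
    ∑ j ∈ Finset.range (k + 1), (k.choose j : ℝ) * (-1 : ℝ) ^ (k - j) * (j : ℝ) ^ n

open Polynomial Finset

noncomputable def dd (n k : ℕ) : ℝ :=
  ∑ j ∈ Finset.range (k + 1), (k.choose j : ℝ) * (-1 : ℝ) ^ (k - j) * (j : ℝ) ^ n

lemma dd_succ (n m : ℕ) : dd (n+1) (m+1) = (m+1) * (dd n (m+1) + dd n m) := by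
  have key : ∑ i ∈ range (m+1), ((m.choose i : ℝ)) * (-1)^(m-i) * ((i:ℝ)+1)^n
      = dd n (m+1) + dd n m := by
    have pascal : ∀ i, ((m.choose i : ℝ)) = ((m+1).choose (i+1) : ℝ) - (m.choose (i+1) : ℝ) := by
      intro i
      have := Nat.choose_succ_succ (m) (i)
      push_cast [this]; ring
    have h1 : ∑ i ∈ range (m+1), (((m+1).choose (i+1) : ℝ)) * (-1)^(m-i) * ((i:ℝ)+1)^n
        = dd n (m+1) - (-1)^(m+1) * (0:ℝ)^n := by
      conv_rhs => rw [dd, Finset.sum_range_succ']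
      simp only [Nat.succ_sub_succ, Nat.choose_zero_right, Nat.cast_one, one_mul,
        Nat.cast_zero, Nat.sub_zero, Nat.cast_add]
      ring
    have h2 : ∑ i ∈ range (m+1), ((m.choose (i+1) : ℝ)) * (-1)^(m-i) * ((i:ℝ)+1)^n
        = -(dd n m - (-1)^m * (0:ℝ)^n) := by
      rw [Finset.sum_range_succ]
      conv_rhs => rw [dd, Finset.sum_range_succ']
      simp only [Nat.choose_succ_self, Nat.cast_zero, zero_mul, add_zero,
        Nat.choose_zero_right, Nat.cast_one, one_mul, Nat.sub_zero, Nat.cast_add]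
      rw [add_sub_cancel_right, ← Finset.sum_neg_distrib]
      refine Finset.sum_congr rfl fun i hi => ?_
      have hi' : i < m := Finset.mem_range.mp hi
      have hmi : m - i = (m - (i+1)) + 1 := by omega
      rw [hmi]; ring
    calc ∑ i ∈ range (m+1), ((m.choose i : ℝ)) * (-1)^(m-i) * ((i:ℝ)+1)^n
        = ∑ i ∈ range (m+1), ((((m+1).choose (i+1) : ℝ)) * (-1)^(m-i) * ((i:ℝ)+1)^n
            - ((m.choose (i+1) : ℝ)) * (-1)^(m-i) * ((i:ℝ)+1)^n) := by
          refine Finset.sum_congr rfl fun i _ => ?_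
          rw [pascal i]; ring
      _ = _ := by
          rw [Finset.sum_sub_distrib, h1, h2]
          have : ((-1:ℝ))^(m+1) = -(-1)^m := by ring
          rw [this]; ring
  conv_lhs => rw [dd, Finset.sum_range_succ']
  simp only [Nat.cast_zero, zero_pow (Nat.succ_ne_zero n), mul_zero, add_zero]
  rw [← key, Finset.mul_sum]
  refine Finset.sum_congr rfl fun i _ => ?_
  have hnat : (i+1) * ((m+1).choose (i+1)) = (m+1) * (m.choose i) := by
    rw [mul_comm]; exact (Nat.add_one_mul_choose_eq m i).symm
  have hc : ((i:ℝ)+1) * (((m+1).choose (i+1) : ℝ)) = ((m:ℝ)+1) * (m.choose i : ℝ) := by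
    exact_mod_cast hnat
  rw [Nat.succ_sub_succ]
  push_cast
  linear_combination ((-1:ℝ))^(m-i) * ((i:ℝ)+1)^n * hc

lemma dd_eq_zero (n k : ℕ) (h : n < k) : dd n k = 0 := by
  induction n generalizing k with
  | zero =>
    obtain ⟨m, rfl⟩ := Nat.exists_eq_add_of_lt h
    have := add_pow (1:ℝ) (-1) (0+m+1)
    simp only [add_neg_cancel, one_pow, one_mul] at this
    rw [zero_pow (by omega), dd] at *
    rw [this]
    refine Finset.sum_congr rfl fun i _ => ?_
    push_cast
    ring
  | succ n ih =>
    obtain ⟨m, rfl⟩ := Nat.exists_eq_add_of_lt h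
    have h1 : dd (n+1) (n+1+m+1) = dd (n+1) ((n+m+1)+1) := by ring_nf
    rw [h1, dd_succ, ih _ (by omega), ih _ (by omega)]
    ring

lemma stirling2_eq_dd (n k : ℕ) : stirling2 n k = dd n k / k.factorial := by
  rw [stirling2, dd]; ring

lemma stirling2_rec (n k : ℕ) :
    stirling2 (n+1) (k+1) = (k+1) * stirling2 n (k+1) + stirling2 n k := by
  rw [stirling2_eq_dd, stirling2_eq_dd, stirling2_eq_dd, dd_succ]
  have hk : (k.factorial : ℝ) ≠ 0 := Nat.cast_ne_zero.mpr k.factorial_ne_zero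
  have hk1 : ((k+1).factorial : ℝ) ≠ 0 := Nat.cast_ne_zero.mpr (k+1).factorial_ne_zero
  have hfac : ((k+1).factorial : ℝ) = (k+1) * k.factorial := by
    rw [Nat.factorial_succ]; push_cast; ring
  rw [hfac]
  field_simp [hfac]

lemma stirling2_succ_zero (n : ℕ) : stirling2 (n+1) 0 = 0 := by
  simp [stirling2]

lemma stirling2_eq_zero (n k : ℕ) (h : n < k) : stirling2 n k = 0 := by
  rw [stirling2_eq_dd, dd_eq_zero n k h, zero_div]

lemma poch_succ (a : ℝ) (k : ℕ) : poch a (k+1) = poch a k * (a + k) := by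
  rw [poch, Finset.prod_range_succ, poch]

lemma X_mul_aux (k : ℕ) : (X : ℝ[X]) * (C (k:ℝ) * X ^ (k-1)) = C (k:ℝ) * X ^ k := by
  cases k with
  | zero => simp
  | succ m => rw [Nat.add_sub_cancel]; ring

lemma onesubX_mul_aux (j : ℕ) :
    ((1:ℝ[X]) - X) * (C (j:ℝ) * (1-X) ^ (j-1)) = C (j:ℝ) * (1-X) ^ j := by
  cases j with
  | zero => simp
  | succ m => rw [Nat.add_sub_cancel]; ring

lemma key_term (a : ℝ) (k j : ℕ) :
    X * (1 - X) * derivative ((X:ℝ[X])^k * (1-X)^j) + C (a + k + j) * X * (X^k * (1-X)^j)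
      = C (k:ℝ) * (X^k * (1-X)^(j+1)) + C (a + (k:ℝ)) * (X^(k+1) * (1-X)^j) := by
  rw [derivative_mul, derivative_X_pow, derivative_pow]
  have hd : derivative ((1:ℝ[X]) - X) = -1 := by simp
  rw [hd]
  have e1 : (X:ℝ[X]) * (1-X) * (C (k:ℝ) * X^(k-1) * (1-X)^j)
      = (X * (C (k:ℝ) * X^(k-1))) * (1-X)^(j+1) := by ring
  have e2 : ((1:ℝ[X])-X) * (C (j:ℝ) * (1-X)^(j-1)) = C (j:ℝ) * (1-X)^j :=
    onesubX_mul_aux j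
  rw [mul_add]
  rw [e1, X_mul_aux]
  have e3 : (X:ℝ[X]) * (1-X) * (X^k * (C (j:ℝ) * (1-X)^(j-1) * -1))
      = -(X^(k+1) * ((1-X) * (C (j:ℝ) * (1-X)^(j-1)))) := by ring
  rw [e3, e2]
  have : C (a + (k:ℝ) + (j:ℝ)) = C (a + (k:ℝ)) + C ((j:ℝ)) := by rw [← C_add]
  rw [this]
  ring

/-- The polynomials associated to the Meixner moments, defined by
`P_0 = 1` and `P_{n+1} = X(1-X) P_n' + (α+n) X P_n`, satisfy
`P_n = Σ_{k=0}^n S(n,k) (α)_k X^k (1-X)^{n-k}`. -/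
theorem meixner_polynomials_explicit
    (α : ℝ) (P : ℕ → Polynomial ℝ) (hP0 : P 0 = 1)
    (hP : ∀ n : ℕ, P (n + 1) =
      Polynomial.X * (1 - Polynomial.X) * Polynomial.derivative (P n) +
        Polynomial.C (α + n) * Polynomial.X * P n) :
    ∀ n : ℕ, P n = ∑ k ∈ Finset.range (n + 1),
      Polynomial.C (stirling2 n k * poch α k) * Polynomial.X ^ k *
        (1 - Polynomial.X) ^ (n - k) := by
  intro n
  induction n with
  | zero =>
    rw [hP0]
    simp [stirling2, poch]
  | succ n ih =>
    rw [hP n, ih, derivative_sum, Finset.mul_sum, Finset.mul_sum, ← Finset.sum_add_distrib]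
    have step : ∀ k ∈ Finset.range (n+1),
        X * (1 - X) * derivative (C (stirling2 n k * poch α k) * X ^ k * (1 - X) ^ (n - k)) +
          C (α + n) * X * (C (stirling2 n k * poch α k) * X ^ k * (1 - X) ^ (n - k))
        = C ((k:ℝ) * (stirling2 n k * poch α k)) * X ^ k * (1 - X) ^ (n + 1 - k)
          + C ((α + k) * (stirling2 n k * poch α k)) * X ^ (k+1) * (1 - X) ^ (n - k) := by
      intro k hk
      have hkn : k ≤ n := Nat.lt_succ_iff.mp (Finset.mem_range.mp hk)
      set c := stirling2 n k * poch α k with hc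
      have h1 : C c * X ^ k * ((1:ℝ[X]) - X) ^ (n - k) = C c * (X ^ k * (1 - X) ^ (n - k)) := by
        ring
      rw [h1, derivative_C_mul]
      have hcast : α + (n:ℝ) = α + (k:ℝ) + ((n - k : ℕ) : ℝ) := by
        rw [Nat.cast_sub hkn]; ring
      have h2 : n + 1 - k = (n - k) + 1 := by omega
      rw [hcast, h2]
      calc X * (1 - X) * (C c * derivative ((X:ℝ[X]) ^ k * (1 - X) ^ (n - k))) +
            C (α + (k:ℝ) + ((n-k:ℕ):ℝ)) * X * (C c * (X ^ k * (1 - X) ^ (n - k)))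
          = C c * (X * (1 - X) * derivative ((X:ℝ[X]) ^ k * (1 - X) ^ (n - k)) +
              C (α + (k:ℝ) + ((n-k:ℕ):ℝ)) * X * (X ^ k * (1 - X) ^ (n - k))) := by ring
        _ = C c * (C (k:ℝ) * (X^k * (1-X)^((n-k)+1)) +
              C (α + (k:ℝ)) * (X^(k+1) * (1-X)^(n-k))) := by
            rw [key_term α k (n-k)]
        _ = _ := by simp only [C_mul, C_add]; ring
    rw [Finset.sum_congr rfl step, Finset.sum_add_distrib]
    have hA : (∑ k ∈ Finset.range (n+1),
          C ((k:ℝ) * (stirling2 n k * poch α k)) * X ^ k * ((1:ℝ[X]) - X) ^ (n + 1 - k))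
        = ∑ k ∈ Finset.range (n+1),
          C (((k+1:ℕ):ℝ) * (stirling2 n (k+1) * poch α (k+1))) * X ^ (k+1) *
            ((1:ℝ[X]) - X) ^ (n - k) := by
      have top : C (((n+1:ℕ):ℝ) * (stirling2 n (n+1) * poch α (n+1))) * X ^ (n+1) *
          ((1:ℝ[X]) - X) ^ (n + 1 - (n+1)) = 0 := by
        rw [stirling2_eq_zero n (n+1) (by omega)]
        simp
      have expand : (∑ k ∈ Finset.range (n+2),
            C ((k:ℝ) * (stirling2 n k * poch α k)) * X ^ k * ((1:ℝ[X]) - X) ^ (n + 1 - k))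
          = ∑ k ∈ Finset.range (n+1),
            C ((k:ℝ) * (stirling2 n k * poch α k)) * X ^ k * ((1:ℝ[X]) - X) ^ (n + 1 - k) := by
        rw [Finset.sum_range_succ, top, add_zero]
      rw [← expand, Finset.sum_range_succ']
      simp only [Nat.cast_zero, zero_mul, map_zero, Nat.succ_sub_succ, add_zero]
    rw [hA]
    conv_rhs => rw [Finset.sum_range_succ']
    simp only [stirling2_succ_zero, zero_mul, map_zero, add_zero, Nat.succ_sub_succ]
    rw [← Finset.sum_add_distrib]
    refine Finset.sum_congr rfl fun k hk => ?_
    have hs : stirling2 (n+1) (k+1) * poch α (k+1)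
        = ((k+1:ℕ):ℝ) * (stirling2 n (k+1) * poch α (k+1))
          + (α + k) * (stirling2 n k * poch α k) := by
      rw [stirling2_rec, poch_succ]
      push_cast
      ring
    rw [hs, C_add]
    ring
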